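/- Let $E_0>0$, $c\in(0,E_0)$, $q\geq 1$ an integer and $M\geq 0$, and let $\Lambda:[0,E_0]\to\mathbb{R}$ be continuously differentiable with $\Lambda(c)=0$ and $\Lambda'(c)<0$. For every $\varepsilon>0$ there exist $\delta>0$ and $t_1>0$ with the following property: if $t_0\geq t_1$ and $v:[t_0,\infty)\to[0,E_0]$ is differentiable with $|v(t_0)-c|\leq\delta$ and $v'(t)=t^{-1}\,\Lambda(v(t))+\rho(t)$ for all $t\geq t_0$, where $|\rho(t)|\leq M\,t^{-1-1/q}$, then $|v(t)-c|\leq\varepsilon$ for all $t\geq t_0$. -/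

import Mathlib

open Real Set Filter

/-- Barrier lemma: if `f a ≤ m < b` and `f' < 0` whenever `f ∈ [m, b]`,
then `f` stays `≤ b`. -/
lemma barrier_aux {f f' : ℝ → ℝ} {a m b : ℝ} (hmb : m < b)
    (hd : ∀ t ≥ a, HasDerivAt f (f' t) t)
    (ha : f a ≤ m)
    (H : ∀ s ≥ a, f s ∈ Icc m b → f' s < 0) :
    ∀ t ≥ a, f t ≤ b := by
  intro t hta
  by_contra hbt
  push_neg at hbt
  have hcont : ContinuousOn f (Ici a) := fun s hs => ((hd s hs).continuousAt).continuousWithinAt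
  have hcontIcc : ∀ {x y : ℝ}, a ≤ x → ContinuousOn f (Icc x y) :=
    fun {x y} hx => hcont.mono (fun z hz => le_trans hx hz.1)
  -- set of times in [a,t] where f ≥ b
  set S : Set ℝ := Icc a t ∩ f ⁻¹' (Ici b) with hS
  have hScl : IsClosed S := (hcontIcc le_rfl).preimage_isClosed_of_isClosed isClosed_Icc isClosed_Ici
  have htS : t ∈ S := ⟨⟨hta, le_rfl⟩, hbt.le⟩
  have hSbdd : BddBelow S := ⟨a, fun s hs => hs.1.1⟩
  set u := sInf S with hu
  have huS : u ∈ S := hScl.csInf_mem ⟨t, htS⟩ hSbdd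
  have hau : a ≤ u := huS.1.1
  have hau' : a < u := lt_of_le_of_ne hau (by
    intro h
    rw [← h] at huS
    exact absurd huS.2 (not_le.mpr (lt_of_le_of_lt ha hmb)))
  have hlt : ∀ s, a ≤ s → s < u → f s < b := by
    intro s hs hsu
    by_contra hfs
    push_neg at hfs
    have : s ∈ S := ⟨⟨hs, hsu.le.trans huS.1.2⟩, hfs⟩
    exact absurd (csInf_le hSbdd this) (not_le.mpr hsu)
  -- f u = b
  have hfu : f u = b := by
    refine le_antisymm ?_ huS.2
    have htend : Tendsto f (nhdsWithin u (Iio u)) (nhds (f u)) :=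
      ((hd u hau).continuousAt.continuousWithinAt)
    refine le_of_tendsto htend ?_
    filter_upwards [Ioo_mem_nhdsLT_of_mem ⟨hau', le_rfl⟩] with s hs
    exact (hlt s hs.1.le hs.2).le
  -- last time ≤ m before u
  set T : Set ℝ := Icc a u ∩ f ⁻¹' (Iic m) with hT
  have hTcl : IsClosed T := (hcontIcc le_rfl).preimage_isClosed_of_isClosed isClosed_Icc isClosed_Iic
  have haT : a ∈ T := ⟨⟨le_rfl, hau⟩, ha⟩
  have hTbdd : BddAbove T := ⟨u, fun s hs => hs.1.2⟩
  set w := sSup T with hw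
  have hwT : w ∈ T := hTcl.csSup_mem ⟨a, haT⟩ hTbdd
  have haw : a ≤ w := hwT.1.1
  have hwu : w < u := lt_of_le_of_ne hwT.1.2 (by
    intro h
    rw [h] at hwT
    exact absurd hwT.2 (not_le.mpr (hfu ▸ hmb)))
  have hband : ∀ s, w < s → s ≤ u → f s ∈ Icc m b := by
    intro s hws hsu
    constructor
    · by_contra hm
      push_neg at hm
      have : s ∈ T := ⟨⟨haw.trans hws.le, hsu⟩, hm.le⟩
      exact absurd (le_csSup hTbdd this) (not_le.mpr hws)
    · rcases eq_or_lt_of_le hsu with rfl | h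
      · exact hfu.le
      · exact (hlt s (haw.trans hws.le) h).le
  have hanti : StrictAntiOn f (Icc w u) := by
    refine strictAntiOn_of_deriv_neg (convex_Icc _ _) (hcontIcc haw) ?_
    intro x hx
    rw [interior_Icc] at hx
    have hax : a ≤ x := haw.trans hx.1.le
    rw [(hd x hax).deriv]
    exact H x hax (hband x hx.1 hx.2.le)
  have hfin := hanti (left_mem_Icc.mpr hwu.le) (right_mem_Icc.mpr hwu.le) hwu
  rw [hfu] at hfin
  exact absurd (hfin.trans_le (hwT.2.trans hmb.le)) (lt_irrefl b)

/-- Deterministic core of Theorem 6: if the averaged drift `Λ` has a simple zero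
`c ∈ (0, E0)` with `Λ' (c) < 0`, then solutions of `v' = t⁻¹ Λ (v) + ρ` with
`|ρ (t)| ≤ M t^{-1-1/q}`, starting close enough to `c` at a late enough time,
stay within `ε` of `c` (capture near the stable cycle). -/
theorem capture_near_simple_zero (E0 c : ℝ) (q : ℕ) (M : ℝ)
    (hE0 : 0 < E0) (hc : c ∈ Ioo (0:ℝ) E0) (hq : 1 ≤ q) (hM : 0 ≤ M)
    (Λ : ℝ → ℝ) (hΛ : ContDiffOn ℝ 1 Λ (Icc 0 E0))
    (hΛc : Λ c = 0) (hΛ'c : derivWithin Λ (Icc 0 E0) c < 0) :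
    ∀ ε > 0, ∃ δ > 0, ∃ t1 > 0, ∀ t0 ≥ t1,
      ∀ v v' ρ : ℝ → ℝ,
        (∀ t ≥ t0, HasDerivAt v (v' t) t) →
        (∀ t ≥ t0, v t ∈ Icc (0:ℝ) E0) →
        |v t0 - c| ≤ δ →
        (∀ t ≥ t0, v' t = t⁻¹ * Λ (v t) + ρ t) →
        (∀ t ≥ t0, |ρ t| ≤ M * t ^ (-1 - 1/(q:ℝ))) →
        ∀ t ≥ t0, |v t - c| ≤ ε := by
  intro ε hε
  set g := derivWithin Λ (Icc 0 E0) with hg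
  set k := -(g c) / 2 with hk
  have hk0 : 0 < k := by simp only [hk]; linarith
  -- continuity of the derivative at c
  have hgcont : ContinuousOn g (Icc 0 E0) :=
    hΛ.continuousOn_derivWithin (uniqueDiffOn_Icc hE0) le_rfl
  have hmemc : Icc (0:ℝ) E0 ∈ nhds c := Icc_mem_nhds hc.1 hc.2
  have hgc : ContinuousAt g c :=
    (hgcont c ⟨hc.1.le, hc.2.le⟩).continuousAt hmemc
  -- find a radius r
  have hU : (Ioo (0:ℝ) E0 ∩ g ⁻¹' (Iio (-k))) ∈ nhds c := by
    refine Filter.inter_mem (isOpen_Ioo.mem_nhds hc) (hgc.preimage_mem_nhds ?_)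
    refine Iio_mem_nhds ?_
    simp only [hk]; linarith
  obtain ⟨r', hr'0, hball⟩ := Metric.mem_nhds_iff.mp hU
  set r := r'/2 with hrdef
  have hr0 : 0 < r := by positivity
  have hr : ∀ x, c - r ≤ x → x ≤ c + r → x ∈ Ioo (0:ℝ) E0 ∧ g x < -k := by
    intro x h1 h2
    have : x ∈ Metric.ball c r' := by
      rw [Metric.mem_ball, Real.dist_eq, abs_lt]
      constructor <;> simp only [hrdef] at h1 h2 <;> linarith
    have hb := hball this
    exact ⟨hb.1, hb.2⟩
  have h0cr : 0 < c - r := (hr (c - r) le_rfl (by linarith)).1.1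
  have hcrE : c + r < E0 := (hr (c + r) (by linarith) le_rfl).1.2
  -- derivative as a genuine derivative in the interior
  have hΛd : ∀ x ∈ Ioo (0:ℝ) E0, HasDerivAt Λ (g x) x := by
    intro x hx
    exact ((hΛ.differentiableOn one_ne_zero x (Ioo_subset_Icc_self hx)).hasDerivWithinAt).hasDerivAt
      (Icc_mem_nhds hx.1 hx.2)
  -- upper bound on Λ above c
  have hup : ∀ x, c < x → x ≤ c + r → Λ x ≤ -k * (x - c) := by
    intro x hcx hxr
    have hsub : Icc c x ⊆ Icc (0:ℝ) E0 := by
      intro z hz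
      exact ⟨hc.1.le.trans hz.1, hz.2.trans (hxr.trans hcrE.le)⟩
    obtain ⟨ξ, hξ, hslope⟩ := exists_hasDerivAt_eq_slope Λ g hcx (hΛ.continuousOn.mono hsub)
      (fun y hy => hΛd y ⟨hc.1.trans hy.1, lt_of_lt_of_le hy.2 (hxr.trans hcrE.le) |>.trans_le le_rfl⟩)
    have hgξ : g ξ < -k := (hr ξ (by linarith [hξ.1]) (by linarith [hξ.2])).2
    rw [hΛc, sub_zero] at hslope
    have hxc : 0 < x - c := by linarith
    have : Λ x / (x - c) < -k := hslope ▸ hgξ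
    have := (div_lt_iff₀ hxc).mp this
    linarith
  -- lower bound on Λ below c
  have hdown : ∀ x, c - r ≤ x → x < c → k * (c - x) ≤ Λ x := by
    intro x hxr hxc
    have hsub : Icc x c ⊆ Icc (0:ℝ) E0 := by
      intro z hz
      exact ⟨le_trans h0cr.le (hxr.trans hz.1), hz.2.trans hc.2.le⟩
    obtain ⟨ξ, hξ, hslope⟩ := exists_hasDerivAt_eq_slope Λ g hxc (hΛ.continuousOn.mono hsub)
      (fun y hy => hΛd y ⟨h0cr.trans_le (hxr.trans hy.1.le), hy.2.trans hc.2⟩)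
    have hgξ : g ξ < -k := (hr ξ (by linarith [hξ.1]) (by linarith [hξ.2])).2
    rw [hΛc] at hslope
    have hcx : 0 < c - x := by linarith
    have h1 : (0 - Λ x) / (c - x) < -k := hslope ▸ hgξ
    have := (div_lt_iff₀ hcx).mp h1
    nlinarith
  -- parameters
  set ε₀ := min ε r with hε₀def
  have hε₀ : 0 < ε₀ := lt_min hε hr0
  have hε₀ε : ε₀ ≤ ε := min_le_left _ _
  have hε₀r : ε₀ ≤ r := min_le_right _ _
  set A := k * ε₀ / 2 with hA
  have hA0 : 0 < A := by positivity
  set t1 := max 1 ((M/A + 1)^q) with ht1def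
  have ht1pos : (0:ℝ) < t1 := lt_of_lt_of_le one_pos (le_max_left _ _)
  have hqR : (0:ℝ) < (q:ℝ) := by exact_mod_cast Nat.lt_of_lt_of_le Nat.zero_lt_one hq
  -- smallness of the perturbation
  have hsmall : ∀ s, t1 ≤ s → M * s ^ (-1 - 1/(q:ℝ)) < A * s⁻¹ := by
    intro s hs
    have hs1 : (1:ℝ) ≤ s := le_trans (le_max_left _ _) hs
    have hs0 : (0:ℝ) < s := lt_of_lt_of_le one_pos hs1
    have hb : (0:ℝ) ≤ M/A + 1 := by positivity
    have hpow : M/A + 1 ≤ s ^ (1/(q:ℝ)) := by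
      have h1 : ((M/A+1)^q : ℝ) ≤ s := le_trans (le_max_right _ _) hs
      calc M/A + 1 = ((M/A+1)^q) ^ (1/(q:ℝ)) := by
            rw [← rpow_natCast (M/A+1) q, ← rpow_mul hb, mul_one_div, div_self (ne_of_gt hqR),
              rpow_one]
        _ ≤ s ^ (1/(q:ℝ)) := rpow_le_rpow (by positivity) h1 (by positivity)
    have hsq : 0 < s ^ (1/(q:ℝ)) := rpow_pos_of_pos hs0 _
    have hMA : M < A * s ^ (1/(q:ℝ)) := by
      have h2 : M/A < s ^ (1/(q:ℝ)) := lt_of_lt_of_le (lt_add_of_pos_right _ one_pos) hpow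
      calc M = M/A * A := by field_simp
        _ < s ^ (1/(q:ℝ)) * A := mul_lt_mul_of_pos_right h2 hA0
        _ = A * s ^ (1/(q:ℝ)) := mul_comm _ _
    have hsplit : s ^ (-1 - 1/(q:ℝ)) = s⁻¹ * (s ^ (1/(q:ℝ)))⁻¹ := by
      rw [show (-1 - 1/(q:ℝ)) = (-1) + (-(1/(q:ℝ))) by ring, rpow_add hs0, rpow_neg_one,
        rpow_neg hs0.le]
    rw [hsplit]
    have h2 : M * (s ^ (1/(q:ℝ)))⁻¹ < A := by
      rw [← div_eq_mul_inv, div_lt_iff₀ hsq]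
      exact hMA
    calc M * (s⁻¹ * (s ^ (1/(q:ℝ)))⁻¹) = (M * (s ^ (1/(q:ℝ)))⁻¹) * s⁻¹ := by ring
      _ < A * s⁻¹ := mul_lt_mul_of_pos_right h2 (inv_pos.mpr hs0)
  -- conclusion
  refine ⟨ε₀/2, by positivity, t1, ht1pos, ?_⟩
  intro t0 ht0 v v' ρ hdv hvE hv0 heq hρ
  have habs := abs_le.mp hv0
  -- upper barrier
  have hupper : ∀ t ≥ t0, v t ≤ c + ε₀ := by
    refine barrier_aux (m := c + ε₀/2) (by linarith) hdv (by linarith [habs.2]) ?_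
    intro s hss hmem
    have hs1 : t1 ≤ s := le_trans ht0 hss
    have hs0 : (0:ℝ) < s := lt_of_lt_of_le ht1pos hs1
    have hcx : c < v s := lt_of_lt_of_le (by linarith) hmem.1
    have hxr : v s ≤ c + r := hmem.2.trans (by linarith)
    have hΛv : Λ (v s) ≤ -k * (v s - c) := hup _ hcx hxr
    have hΛv2 : Λ (v s) ≤ -A := by
      have : v s - c ≥ ε₀/2 := by linarith [hmem.1]
      nlinarith
    have hρs : ρ s ≤ M * s ^ (-1 - 1/(q:ℝ)) := le_trans (le_abs_self _) (hρ s hss)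
    rw [heq s hss]
    have hstep : s⁻¹ * Λ (v s) ≤ s⁻¹ * (-A) :=
      mul_le_mul_of_nonneg_left hΛv2 (inv_nonneg.mpr hs0.le)
    have hfin := hsmall s hs1
    have : A * s⁻¹ = s⁻¹ * A := mul_comm _ _
    linarith
  -- lower barrier
  have hlower : ∀ t ≥ t0, -(v t) ≤ -(c - ε₀) := by
    refine barrier_aux (f := fun t => -(v t)) (f' := fun t => -(v' t)) (m := -(c - ε₀/2))
      (by linarith) (fun t ht => (hdv t ht).neg) (by simp; linarith [habs.1]) ?_
    intro s hss hmem
    have hs1 : t1 ≤ s := le_trans ht0 hss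
    have hs0 : (0:ℝ) < s := lt_of_lt_of_le ht1pos hs1
    obtain ⟨h1, h2⟩ := hmem
    have hv1 : c - ε₀ ≤ v s := by linarith
    have hv2 : v s ≤ c - ε₀/2 := by linarith
    have hΛv : k * (c - v s) ≤ Λ (v s) := hdown _ (by linarith) (by linarith)
    have hΛv2 : A ≤ Λ (v s) := by nlinarith
    have hρs : -(ρ s) ≤ M * s ^ (-1 - 1/(q:ℝ)) := le_trans (neg_le_abs _) (hρ s hss)
    show -(v' s) < 0
    rw [heq s hss]
    have hstep : s⁻¹ * A ≤ s⁻¹ * Λ (v s) :=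
      mul_le_mul_of_nonneg_left hΛv2 (inv_nonneg.mpr hs0.le)
    have hfin := hsmall s hs1
    have : A * s⁻¹ = s⁻¹ * A := mul_comm _ _
    linarith
  intro t ht
  have h1 := hupper t ht
  have h2 := hlower t ht
  rw [abs_le]
  constructor <;> linarith
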